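/- Over k = ℂ, the surfaces S₀ = {x²z − (y²−1) = 0} and S₁ = {x²z − (1−x)(y²−1) = 0} in A³_ℂ are not algebraically equivalent embeddings: there is no algebraic automorphism Φ of A³_ℂ with Φ(S₁) = S₀. Specifically, every level surface f₁^{−1}(t) of f₁ = x²z − (1−x)(y²−1) is nonsingular, while the level surface f₀^{−1}(1) of f₀ = x²z − (y²−1) is singular, so no automorphism Φ of A³_ℂ and automorphism φ of A¹_ℂ can satisfy f₀ ∘ Φ = φ ∘ f₁. -/

import Mathlib

open MvPolynomial

/-- A self-map of `ℂ³` is a polynomial map if each coordinate is given by a polynomial. -/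
def IsPolyMap3 (Φ : (Fin 3 → ℂ) → (Fin 3 → ℂ)) : Prop :=
  ∃ F : Fin 3 → MvPolynomial (Fin 3) ℂ, ∀ p i, Φ p i = eval p (F i)

/-- A self-map of `ℂ` is a polynomial map if it is given by a polynomial. -/
def IsPolyMap1 (φ : ℂ → ℂ) : Prop :=
  ∃ F : Polynomial ℂ, ∀ x, φ x = F.eval x

lemma mvDiff (P : MvPolynomial (Fin 3) ℂ) (x : Fin 3 → ℂ) :
    DifferentiableAt ℂ (fun p : Fin 3 → ℂ => eval p P) x := by
  have h : AnalyticAt ℂ (fun p : Fin 3 → ℂ => aeval p P) x :=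
    AnalyticAt.aeval_mvPolynomial (f := id)
      (fun i => ((ContinuousLinearMap.proj i : (Fin 3 → ℂ) →L[ℂ] ℂ)).analyticAt x) P
  have e : ∀ p : Fin 3 → ℂ, (aeval p P : ℂ) = eval p P := by
    intro p
    simp only [MvPolynomial.aeval_def, Algebra.algebraMap_self]
    rfl
  simpa [e] using h.differentiableAt

noncomputable abbrev pj (i : Fin 3) : (Fin 3 → ℂ) →L[ℂ] ℂ := ContinuousLinearMap.proj i

lemma projD (i : Fin 3) (x : Fin 3 → ℂ) :
    HasFDerivAt (fun p : Fin 3 → ℂ => p i) (pj i) x :=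
  (pj i).hasFDerivAt

lemma sqD (i : Fin 3) (x : Fin 3 → ℂ) :
    HasFDerivAt (fun p : Fin 3 → ℂ => p i ^ 2) (x i • pj i + x i • pj i) x := by
  have hfun : (fun p : Fin 3 → ℂ => p i ^ 2) = fun p => p i * p i := by
    funext q; ring
  rw [hfun]
  exact (projD i x).mul (projD i x)

/-- derivative of f₁ at any point -/
lemma f1D (x : Fin 3 → ℂ) :
    HasFDerivAt (fun p : Fin 3 → ℂ => p 0 ^ 2 * p 2 - (1 - p 0) * (p 1 ^ 2 - 1))
      ((x 0 ^ 2 • pj 2 + x 2 • (x 0 • pj 0 + x 0 • pj 0)) -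
        ((1 - x 0) • (x 1 • pj 1 + x 1 • pj 1) + (x 1 ^ 2 - 1) • (-pj 0))) x :=
  ((sqD 0 x).mul (projD 2 x)).sub
    (((projD 0 x).const_sub 1).mul ((sqD 1 x).sub_const 1))

/-- derivative of f₀ at the origin is zero -/
lemma f0D : HasFDerivAt (fun p : Fin 3 → ℂ => p 0 ^ 2 * p 2 - (p 1 ^ 2 - 1))
    (0 : (Fin 3 → ℂ) →L[ℂ] ℂ) (0 : Fin 3 → ℂ) := by
  have h := ((sqD 0 0).mul (projD 2 0)).sub ((sqD 1 0).sub_const 1)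
  refine h.congr_fderiv ?_
  ext v
  simp

theorem stmt12 :
    let f₀ : (Fin 3 → ℂ) → ℂ := fun p => p 0 ^ 2 * p 2 - (p 1 ^ 2 - 1)
    let f₁ : (Fin 3 → ℂ) → ℂ := fun p => p 0 ^ 2 * p 2 - (1 - p 0) * (p 1 ^ 2 - 1)
    (f₀ (fun _ => 0) = 1 ∧
      (2 * (0 : ℂ) * 0 = 0 ∧ -(2 * (0 : ℂ)) = 0 ∧ ((0 : ℂ)) ^ 2 = 0)) ∧
    (∀ (t : ℂ) (p : Fin 3 → ℂ), f₁ p = t →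
      ¬(2 * p 0 * p 2 + (p 1 ^ 2 - 1) = 0 ∧ -(1 - p 0) * (2 * p 1) = 0 ∧ p 0 ^ 2 = 0)) ∧
    ¬ ∃ (Φ : (Fin 3 → ℂ) ≃ (Fin 3 → ℂ)) (φ : ℂ ≃ ℂ),
      IsPolyMap3 Φ ∧ IsPolyMap3 Φ.symm ∧ IsPolyMap1 φ ∧ IsPolyMap1 φ.symm ∧
      ∀ p, f₀ (Φ p) = φ (f₁ p) := by
  intro f₀ f₁
  have part2 : ∀ (t : ℂ) (p : Fin 3 → ℂ), f₁ p = t →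
      ¬(2 * p 0 * p 2 + (p 1 ^ 2 - 1) = 0 ∧ -(1 - p 0) * (2 * p 1) = 0 ∧ p 0 ^ 2 = 0) := by
    rintro t p _ ⟨h1, h2, h3⟩
    have hp0 : p 0 = 0 := by
      have := pow_eq_zero_iff (n := 2) (by norm_num) |>.mp h3
      exact this
    rw [hp0] at h2
    have hp1 : p 1 = 0 := by
      have : (2 : ℂ) * p 1 = 0 := by linear_combination -h2
      simpa using this
    rw [hp0, hp1] at h1
    norm_num at h1
  refine ⟨⟨by norm_num, by norm_num⟩, part2, ?_⟩
  rintro ⟨Φ, φ, ⟨F, hF⟩, _, ⟨P, hP⟩, ⟨Q, hQ⟩, hcomp⟩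
  -- φ is affine: P = C a * X + C b with a ≠ 0
  have hPQ : P.comp Q = Polynomial.X := by
    apply Polynomial.funext
    intro r
    have : P.eval (Q.eval r) = r := by
      rw [← hQ, ← hP, φ.apply_symm_apply]
    simpa [Polynomial.eval_comp] using this
  have hdeg : P.natDegree = 1 := by
    have := congrArg Polynomial.natDegree hPQ
    rw [Polynomial.natDegree_comp, Polynomial.natDegree_X] at this
    exact Nat.eq_one_of_mul_eq_one_right this
  set a := P.coeff 1 with ha
  set b := P.coeff 0 with hb
  have hPeq : P = Polynomial.C a * Polynomial.X + Polynomial.C b :=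
    Polynomial.eq_X_add_C_of_natDegree_le_one hdeg.le
  have haz : a ≠ 0 := by
    have : P.coeff P.natDegree ≠ 0 := Polynomial.leadingCoeff_ne_zero.mpr
      (fun h => by simp [h] at hdeg)
    rwa [hdeg] at this
  have hphi : ∀ x, φ x = a * x + b := by
    intro x; rw [hP, hPeq]; simp
  -- key point
  set p := Φ.symm 0 with hpdef
  have hΦp : Φ p = 0 := Φ.apply_symm_apply 0
  -- Φ is differentiable at p
  have hΦdiff : DifferentiableAt ℂ (Φ : (Fin 3 → ℂ) → (Fin 3 → ℂ)) p := by
    rw [differentiableAt_pi]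
    intro i
    have : (fun q : Fin 3 → ℂ => (Φ q) i) = fun q => eval q (F i) := by
      funext q; exact hF q i
    rw [this]
    exact mvDiff (F i) p
  -- f₀ ∘ Φ has derivative 0 at p
  have hf0 : HasFDerivAt f₀ (0 : (Fin 3 → ℂ) →L[ℂ] ℂ) (Φ p) := by
    rw [hΦp]; exact f0D
  have hcomp0 : HasFDerivAt (fun q => f₀ (Φ q)) (0 : (Fin 3 → ℂ) →L[ℂ] ℂ) p := by
    have := hf0.comp p hΦdiff.hasFDerivAt
    simp only [ContinuousLinearMap.zero_comp] at this
    exact this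
  -- f₁ = a⁻¹ * (f₀ ∘ Φ - b)
  have hf1eq : f₁ = fun q => a⁻¹ * (f₀ (Φ q) - b) := by
    funext q
    rw [hcomp q, hphi]
    field_simp
    ring
  have hf1zero : HasFDerivAt f₁ (0 : (Fin 3 → ℂ) →L[ℂ] ℂ) p := by
    rw [hf1eq]
    have := (hcomp0.sub_const b).const_mul a⁻¹
    exact this.congr_fderiv (by ext v; simp)
  have hD := (f1D p).unique hf1zero
  have hv : ∀ v, ((p 0 ^ 2 • pj 2 + p 2 • (p 0 • pj 0 + p 0 • pj 0)) -
      ((1 - p 0) • (p 1 • pj 1 + p 1 • pj 1) + (p 1 ^ 2 - 1) • (-pj 0))) v = 0 := by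
    intro v; rw [hD]; rfl
  have e0 := hv (Pi.single 0 1)
  have e1 := hv (Pi.single 1 1)
  have e2 := hv (Pi.single 2 1)
  simp [Pi.single_apply] at e0 e1 e2
  obtain h | h := e1
  · rw [e2] at h; norm_num at h
  · refine part2 (f₁ p) p rfl ⟨by linear_combination e0, by rw [h]; ring, by rw [e2]; ring⟩
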